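/- Let 1 < p < ∞, 1/p + 1/p' = 1, and let Y be a Banach space such that inequality (6) holds for Y* and p': limsup_n (‖y*‖^{p'} + ‖y*_n‖^{p'})^{1/p'} ≤ limsup_n ((‖y* + y*_n‖^{p'} + ‖y* − y*_n‖^{p'})/2)^{1/p'} for all y* ∈ Y* and all weak* null sequences (y*_n) in Y*. Then every contraction T: ℓ_p → Y has the p'-averaged property (M*): limsup_n ‖x* + T* y*_n‖ ≤ limsup_n ((‖y* + y*_n‖^{p'} + ‖y* − y*_n‖^{p'})/2)^{1/p'} whenever x* ∈ (ℓ_p)*, y* ∈ Y* with ‖x*‖ ≤ ‖y*‖ and (y*_n) is weak* null in Y*. -/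

import Mathlib

open Filter Topology NormedSpace ENNReal MeasureTheory

noncomputable section

/-- A sequence in `X` is weakly null if it tends to zero in the weak topology,
i.e. `f (xs n) → 0` for every continuous linear functional `f`. -/
def WeaklyNull {X : Type*} [NormedAddCommGroup X] [NormedSpace ℝ X] (xs : ℕ → X) : Prop :=
  ∀ f : StrongDual ℝ X, Tendsto (fun n => f (xs n)) atTop (𝓝 0)

/-- The annihilator `J^⊥` of a subspace `J` in the continuous dual. -/
def annih {Z : Type*} [NormedAddCommGroup Z] [NormedSpace ℝ Z] (J : Submodule ℝ Z) :
    Submodule ℝ (StrongDual ℝ Z) where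
  carrier := {f | ∀ x ∈ J, f x = 0}
  add_mem' := by
    intro f g hf hg x hx
    simp [hf x hx, hg x hx]
  zero_mem' := by intro x hx; rfl
  smul_mem' := by
    intro c f hf x hx
    simp [hf x hx]

/-- `J` is an M-ideal in `Z`: there is a closed subspace `V` of the dual such that
`Z* = J^⊥ ⊕₁ V` (algebraic direct sum with additive norm). -/
def IsMIdeal {Z : Type*} [NormedAddCommGroup Z] [NormedSpace ℝ Z] (J : Submodule ℝ Z) : Prop :=
  ∃ V : Submodule ℝ (StrongDual ℝ Z), IsClosed (V : Set (StrongDual ℝ Z)) ∧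
    (∀ f : StrongDual ℝ Z, ∃ g ∈ annih J, ∃ h ∈ V, f = g + h) ∧
    annih J ⊓ V = ⊥ ∧
    ∀ g ∈ annih J, ∀ h ∈ V, ‖g + h‖ = ‖g‖ + ‖h‖

/-- Conditions (a)–(c) on a sequence of compact operators `K n` on `X`:
(a) `K n x → x` for all `x`; (b) `(K n)* f → f` in norm for every `f ∈ X*`;
(c) `‖Id − 2 K n‖ → 1`. -/
def ABC {X : Type*} [NormedAddCommGroup X] [NormedSpace ℝ X] (K : ℕ → X →L[ℝ] X) : Prop :=
  (∀ n, IsCompactOperator (K n)) ∧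
  (∀ x : X, Tendsto (fun n => (K n) x) atTop (𝓝 x)) ∧
  (∀ f : StrongDual ℝ X, Tendsto (fun n => f.comp (K n)) atTop (𝓝 f)) ∧
  Tendsto (fun n => ‖ContinuousLinearMap.id ℝ X - (2 : ℝ) • K n‖) atTop (𝓝 1)

/-- Inequality (7) for `X` and exponent `p`. -/
def Ineq7 (X : Type*) [NormedAddCommGroup X] [NormedSpace ℝ X] (p : ℝ) : Prop :=
  ∀ (x : X) (xs : ℕ → X), WeaklyNull xs →
    limsup (fun n => (‖x‖ ^ p + ‖xs n‖ ^ p) ^ (1 / p)) atTop ≤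
    limsup (fun n => ((‖x + xs n‖ ^ p + ‖x - xs n‖ ^ p) / 2) ^ (1 / p)) atTop

/-- A sequence in the dual of `Y` is weak* null if `fs n y → 0` for every `y ∈ Y`. -/
def WeakStarNull {Y : Type*} [NormedAddCommGroup Y] [NormedSpace ℝ Y]
    (fs : ℕ → StrongDual ℝ Y) : Prop :=
  ∀ y : Y, Tendsto (fun n => fs n y) atTop (𝓝 0)

/-- Two-term Hölder inequality in `ℝ`. -/
lemma holder_two {pt q : ℝ} (hpq : pt.HolderConjugate q) {A B s t : ℝ}
    (hA : 0 ≤ A) (hB : 0 ≤ B) (hs : 0 ≤ s) (ht : 0 ≤ t) :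
    A * s + B * t ≤ (A ^ q + B ^ q) ^ (1 / q) * (s ^ pt + t ^ pt) ^ (1 / pt) := by
  have h := Real.inner_le_Lp_mul_Lq (Finset.univ : Finset (Fin 2)) ![A, B] ![s, t] hpq.symm
  simpa [Fin.sum_univ_two, abs_of_nonneg hA, abs_of_nonneg hB, abs_of_nonneg hs,
    abs_of_nonneg ht] using h

lemma rpow_rpow_oneDiv {x c : ℝ} (hx : 0 ≤ x) (hc : c ≠ 0) : (x ^ c) ^ (1 / c) = x := by
  rw [← Real.rpow_mul hx, mul_one_div_cancel hc, Real.rpow_one]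

lemma rpow_oneDiv_rpow {x c : ℝ} (hx : 0 ≤ x) (hc : c ≠ 0) : (x ^ (1 / c)) ^ c = x := by
  rw [← Real.rpow_mul hx, one_div_mul_cancel hc, Real.rpow_one]

set_option maxHeartbeats 2000000 in
/-- If inequality (6) holds for `Y*` and the conjugate exponent `p'`, then every contraction
`T : ℓ_p → Y` has the `p'`-averaged property (M*). -/
theorem pAveraged_Mstar_of_ineq6
    (p : ℝ≥0∞) [Fact (1 ≤ p)] (hp : 1 < p) (hp' : p ≠ ∞)
    (q : ℝ) (hq : 1 / p.toReal + 1 / q = 1)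
    (Y : Type*) [NormedAddCommGroup Y] [NormedSpace ℝ Y] [CompleteSpace Y]
    (h6 : ∀ (f : StrongDual ℝ Y) (fs : ℕ → StrongDual ℝ Y), WeakStarNull fs →
      limsup (fun n => (‖f‖ ^ q + ‖fs n‖ ^ q) ^ (1 / q)) atTop ≤
      limsup (fun n => ((‖f + fs n‖ ^ q + ‖f - fs n‖ ^ q) / 2) ^ (1 / q)) atTop)
    (T : lp (fun _ : ℕ => ℝ) p →L[ℝ] Y) (hT : ‖T‖ ≤ 1) :
    ∀ (g : StrongDual ℝ (lp (fun _ : ℕ => ℝ) p)) (f : StrongDual ℝ Y)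
      (fs : ℕ → StrongDual ℝ Y), ‖g‖ ≤ ‖f‖ → WeakStarNull fs →
      limsup (fun n => ‖g + (fs n).comp T‖) atTop ≤
      limsup (fun n => ((‖f + fs n‖ ^ q + ‖f - fs n‖ ^ q) / 2) ^ (1 / q)) atTop := by
  intro g f fs hgf hfs
  -- exponent arithmetic
  have hpt1 : 1 < p.toReal := by
    rw [← ENNReal.toReal_one]
    exact ENNReal.toReal_strict_mono hp' hp
  set pt := p.toReal with hptdef
  have hpq : pt.HolderConjugate q := Real.holderConjugate_iff.mpr ⟨hpt1, by simpa [one_div] using hq⟩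
  have hqpt : q.HolderConjugate pt := hpq.symm
  have hpt0 : 0 < pt := hpq.pos
  have hq0 : 0 < q := hqpt.pos
  -- evaluation of a functional on a finite section
  have gsum : ∀ (φ : StrongDual ℝ (lp (fun _ : ℕ => ℝ) p)) (c : ℕ → ℝ) (t : Finset ℕ),
      φ (∑ k ∈ t, lp.single p k (c k)) = ∑ k ∈ t, c k * φ (lp.single p k 1) := by
    intro φ c t
    rw [map_sum]
    refine Finset.sum_congr rfl fun k _ => ?_
    have h1 : (lp.single p k (c k) : lp (fun _ : ℕ => ℝ) p) = c k • lp.single p k (1 : ℝ) := by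
      have h2 := lp.single_smul (E := fun _ : ℕ => ℝ) p k (c k) (1 : ℝ)
      rw [smul_eq_mul, mul_one] at h2
      exact h2
    rw [h1, ContinuousLinearMap.map_smul, smul_eq_mul]
  -- the coordinates of g
  set a : ℕ → ℝ := fun k => g (lp.single p k (1 : ℝ)) with ha
  -- Hölder for finite sums against an lp element
  have holderF : ∀ (t : Finset ℕ) (x : lp (fun _ : ℕ => ℝ) p),
      |∑ k ∈ t, x k * a k| ≤
        (∑ k ∈ t, |a k| ^ q) ^ (1 / q) * (∑ k ∈ t, |x k| ^ pt) ^ (1 / pt) := by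
    intro t x
    have h1 : |∑ k ∈ t, x k * a k| ≤ ∑ k ∈ t, |a k| * |x k| := by
      refine (Finset.abs_sum_le_sum_abs _ _).trans (le_of_eq ?_)
      refine Finset.sum_congr rfl fun k _ => ?_
      rw [abs_mul, mul_comm]
    refine h1.trans ?_
    have h2 := Real.inner_le_Lp_mul_Lq t (fun k => |a k|) (fun k => |x k|) hqpt
    simpa [abs_abs] using h2
  have sum_rpow_le : ∀ (t : Finset ℕ) (x : lp (fun _ : ℕ => ℝ) p), (∑ k ∈ t, |x k| ^ pt) ^ (1 / pt) ≤ ‖x‖ := by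
    intro t x
    have h1 : ∑ k ∈ t, |x k| ^ pt ≤ ‖x‖ ^ pt := by
      have := lp.sum_rpow_le_norm_rpow hpt0 x t
      simpa [Real.norm_eq_abs] using this
    calc (∑ k ∈ t, |x k| ^ pt) ^ (1 / pt) ≤ (‖x‖ ^ pt) ^ (1 / pt) := by
          apply Real.rpow_le_rpow (Finset.sum_nonneg fun k _ => Real.rpow_nonneg (abs_nonneg _) _)
            h1 (by positivity)
      _ = ‖x‖ := rpow_rpow_oneDiv (norm_nonneg _) hpt0.ne'
  -- partial sums of |a k|^q are bounded by ‖g‖^q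
  have bddA : ∀ t : Finset ℕ, ∑ k ∈ t, |a k| ^ q ≤ ‖g‖ ^ q := by
    intro t
    set s := ∑ k ∈ t, |a k| ^ q with hs
    have hs0 : 0 ≤ s := Finset.sum_nonneg fun k _ => Real.rpow_nonneg (abs_nonneg _) _
    set c : ℕ → ℝ := fun k => if a k < 0 then -(|a k| ^ (q - 1)) else |a k| ^ (q - 1) with hc
    have habs : ∀ k, |c k| = |a k| ^ (q - 1) := by
      intro k
      by_cases hk : a k < 0 <;>
        simp [hc, hk, abs_of_nonneg (Real.rpow_nonneg (abs_nonneg (a k)) _)]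
    have hmul : ∀ k, c k * a k = |a k| ^ q := by
      intro k
      have hne : q - 1 + 1 ≠ 0 := by rw [sub_add_cancel]; exact hq0.ne'
      have hiff : |a k| ^ q = |a k| ^ (q - 1) * |a k| := by
        nth_rewrite 1 [show q = q - 1 + 1 by ring]
        rw [Real.rpow_add' (abs_nonneg _) hne, Real.rpow_one]
      by_cases hk : a k < 0
      · have hneg : |a k| = -a k := abs_of_neg hk
        simp only [hc, if_pos hk]
        rw [hiff, hneg]; ring
      · have hpos : |a k| = a k := abs_of_nonneg (not_lt.mp hk)
        simp only [hc, if_neg hk]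
        rw [hiff, hpos]
    set u : lp (fun _ : ℕ => ℝ) p := ∑ k ∈ t, lp.single p k (c k) with hu
    have hgu : g u = s := by
      rw [hu, gsum g c t, hs]
      exact Finset.sum_congr rfl fun k _ => hmul k
    have hnu : ‖u‖ ^ pt = s := by
      rw [hu, lp.norm_sum_single hpt0 c t, hs]
      refine Finset.sum_congr rfl fun k _ => ?_
      rw [Real.norm_eq_abs, habs k, ← Real.rpow_mul (abs_nonneg _),
        hqpt.sub_one_mul_conj]
    have hnu' : ‖u‖ = s ^ (1 / pt) := by
      rw [← hnu]; exact (rpow_rpow_oneDiv (norm_nonneg _) hpt0.ne').symm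
    have hle : s ≤ ‖g‖ * s ^ (1 / pt) := by
      calc s = g u := hgu.symm
        _ ≤ |g u| := le_abs_self _
        _ ≤ ‖g‖ * ‖u‖ := by
            have := g.le_opNorm u
            rwa [Real.norm_eq_abs] at this
        _ = ‖g‖ * s ^ (1 / pt) := by rw [hnu']
    rcases eq_or_lt_of_le hs0 with hzero | hspos
    · rw [← hzero]; positivity
    · have hsplit : s = s ^ (1 / q) * s ^ (1 / pt) := by
        rw [← Real.rpow_add hspos]
        have : 1 / q + 1 / pt = 1 := by
          have := hpq.inv_add_inv_eq_one
          simp only [one_div] at *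
          linarith
        rw [this, Real.rpow_one]
      have h1 : s ^ (1 / q) ≤ ‖g‖ := by
        have hp1 : 0 < s ^ (1 / pt) := Real.rpow_pos_of_pos hspos _
        have := hle
        rw [hsplit] at this
        exact le_of_mul_le_mul_right (by linarith [this]) hp1
      calc s = (s ^ (1 / q)) ^ q := (rpow_oneDiv_rpow hs0 hq0.ne').symm
        _ ≤ ‖g‖ ^ q := Real.rpow_le_rpow (Real.rpow_nonneg hs0 _) h1 hq0.le
  -- summability of |a k|^q
  have hsum : Summable (fun k => |a k| ^ q) :=
    summable_of_sum_range_le (fun k => Real.rpow_nonneg (abs_nonneg _) _)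
      (fun n => bddA (Finset.range n))
  -- tail estimate for g
  have tail : ∀ ε : ℝ, 0 < ε → ∃ N : ℕ, ∀ x : lp (fun _ : ℕ => ℝ) p,
      |g (x - ∑ k ∈ Finset.range N, lp.single p k (x k))| ≤ ε * ‖x‖ := by
    intro ε hε
    have htend := hsum.hasSum.tendsto_sum_nat
    set Sa := ∑' k, |a k| ^ q with hSa
    have hev : ∀ᶠ N in atTop, Sa - ε ^ q < ∑ k ∈ Finset.range N, |a k| ^ q := by
      apply htend.eventually_const_lt
      have : 0 < ε ^ q := Real.rpow_pos_of_pos hε _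
      linarith
    obtain ⟨N, hN⟩ := hev.exists
    refine ⟨N, fun x => ?_⟩
    have hsdiff : ∀ M, N ≤ M →
        ∑ k ∈ Finset.range M \ Finset.range N, |a k| ^ q ≤ ε ^ q := by
      intro M hM
      have hsub : Finset.range N ⊆ Finset.range M := Finset.range_subset_range.mpr hM
      rw [Finset.sum_sdiff_eq_sub hsub]
      have hle : ∑ k ∈ Finset.range M, |a k| ^ q ≤ Sa :=
        Summable.sum_le_tsum _ (fun k _ => Real.rpow_nonneg (abs_nonneg _) _) hsum
      linarith
    -- convergence of sections
    have hconv : Tendsto (fun M => ∑ k ∈ Finset.range M, lp.single p k (x k)) atTop (𝓝 x) :=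
      (lp.hasSum_single hp' x).tendsto_sum_nat
    have hconv2 : Tendsto
        (fun M => g ((∑ k ∈ Finset.range M, lp.single p k (x k)) -
          ∑ k ∈ Finset.range N, lp.single p k (x k))) atTop
        (𝓝 (g (x - ∑ k ∈ Finset.range N, lp.single p k (x k)))) := by
      exact (g.continuous.tendsto _).comp (hconv.sub_const _)
    have habs : Tendsto
        (fun M => |g ((∑ k ∈ Finset.range M, lp.single p k (x k)) -
          ∑ k ∈ Finset.range N, lp.single p k (x k))|) atTop
        (𝓝 (|g (x - ∑ k ∈ Finset.range N, lp.single p k (x k))|)) := hconv2.abs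
    refine le_of_tendsto habs ?_
    filter_upwards [eventually_ge_atTop N] with M hM
    have hsub : Finset.range N ⊆ Finset.range M := Finset.range_subset_range.mpr hM
    have heq : (∑ k ∈ Finset.range M, lp.single p k (x k)) -
        ∑ k ∈ Finset.range N, lp.single p k (x k) =
        ∑ k ∈ Finset.range M \ Finset.range N, lp.single p k (x k) :=
      (Finset.sum_sdiff_eq_sub hsub).symm
    rw [heq, gsum g (fun k => x k) _]
    calc |∑ k ∈ Finset.range M \ Finset.range N, x k * a k|
        ≤ (∑ k ∈ Finset.range M \ Finset.range N, |a k| ^ q) ^ (1 / q) *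
          (∑ k ∈ Finset.range M \ Finset.range N, |x k| ^ pt) ^ (1 / pt) := holderF _ x
      _ ≤ (ε ^ q) ^ (1 / q) * ‖x‖ := by
          apply mul_le_mul _ (sum_rpow_le _ x) (by positivity) (by positivity)
          exact Real.rpow_le_rpow
            (Finset.sum_nonneg fun k _ => Real.rpow_nonneg (abs_nonneg _) _)
            (hsdiff M hM) (by positivity)
      _ = ε * ‖x‖ := by rw [rpow_rpow_oneDiv hε.le hq0.ne']
  -- norm splitting
  have hsplitnorm : ∀ (N : ℕ) (x : lp (fun _ : ℕ => ℝ) p),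
      ‖∑ k ∈ Finset.range N, lp.single p k (x k)‖ ^ pt +
      ‖x - ∑ k ∈ Finset.range N, lp.single p k (x k)‖ ^ pt = ‖x‖ ^ pt := by
    intro N x
    have h1 := lp.norm_sum_single hpt0 (fun k => x k) (Finset.range N)
    have h2 := lp.norm_compl_sum_single hpt0 x (Finset.range N)
    rw [h1, h2]
    ring
  -- head terms for the fs n
  set δ : ℕ → ℕ → ℝ := fun N n => ∑ k ∈ Finset.range N, |fs n (T (lp.single p k 1))| with hδ
  have hδ0 : ∀ N n, 0 ≤ δ N n := fun N n => Finset.sum_nonneg fun k _ => abs_nonneg _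
  have hδtend : ∀ N, Tendsto (fun n => δ N n) atTop (𝓝 0) := by
    intro N
    have := tendsto_finset_sum (Finset.range N)
      (fun k _ => (hfs (T (lp.single p k 1))).abs)
    simpa using this
  have hheadbound : ∀ (N n : ℕ) (x : lp (fun _ : ℕ => ℝ) p),
      |((fs n).comp T) (∑ k ∈ Finset.range N, lp.single p k (x k))| ≤ δ N n * ‖x‖ := by
    intro N n x
    rw [gsum ((fs n).comp T) (fun k => x k) (Finset.range N)]
    calc |∑ k ∈ Finset.range N, x k * ((fs n).comp T) (lp.single p k 1)|
        ≤ ∑ k ∈ Finset.range N, |x k * ((fs n).comp T) (lp.single p k 1)| :=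
          Finset.abs_sum_le_sum_abs _ _
      _ ≤ ∑ k ∈ Finset.range N, ‖x‖ * |fs n (T (lp.single p k 1))| := by
          refine Finset.sum_le_sum fun k _ => ?_
          rw [abs_mul]
          apply mul_le_mul_of_nonneg_right _ (abs_nonneg _)
          have := lp.norm_apply_le_norm (by exact_mod_cast (zero_lt_one.trans hp).ne') x k
          simpa [Real.norm_eq_abs] using this
      _ = δ N n * ‖x‖ := by rw [hδ, ← Finset.mul_sum, mul_comm]
  -- uniform bound on ‖fs n‖
  obtain ⟨C, hC⟩ : ∃ C, ∀ n, ‖fs n‖ ≤ C := by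
    apply banach_steinhaus
    intro y
    have h1 : Tendsto (fun n => ‖fs n y‖) atTop (𝓝 0) := by
      simpa using (hfs y).norm
    obtain ⟨C, hC⟩ := h1.bddAbove_range
    exact ⟨C, fun n => hC (Set.mem_range_self n)⟩
  have hC0 : 0 ≤ C := (norm_nonneg _).trans (hC 0)
  -- the comparison sequence
  set w : ℕ → ℝ := fun n => (‖f‖ ^ q + ‖fs n‖ ^ q) ^ (1 / q) with hw
  have hw0 : ∀ n, 0 ≤ w n := fun n => Real.rpow_nonneg (by positivity) _
  have hwW : ∀ n, w n ≤ (‖f‖ ^ q + C ^ q) ^ (1 / q) := by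
    intro n
    apply Real.rpow_le_rpow (by positivity) _ (by positivity)
    have : ‖fs n‖ ^ q ≤ C ^ q := Real.rpow_le_rpow (norm_nonneg _) (hC n) hq0.le
    linarith
  -- key estimate
  have key : ∀ (N : ℕ) (ε : ℝ), 0 < ε →
      (∀ x : lp (fun _ : ℕ => ℝ) p, |g (x - ∑ k ∈ Finset.range N, lp.single p k (x k))| ≤ ε * ‖x‖) →
      ∀ n, ‖g + (fs n).comp T‖ ≤ w n + (ε + δ N n) := by
    intro N ε hε htail n
    have hwn0 := hw0 n
    have hδn0 := hδ0 N n
    apply ContinuousLinearMap.opNorm_le_bound _ (add_nonneg hwn0 (add_nonneg hε.le hδn0))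
    intro x
    set S : lp (fun _ : ℕ => ℝ) p := ∑ k ∈ Finset.range N, lp.single p k (x k) with hS
    set r : lp (fun _ : ℕ => ℝ) p := x - S with hr
    have hhcomp : ‖(fs n).comp T‖ ≤ ‖fs n‖ := by
      calc ‖(fs n).comp T‖ ≤ ‖fs n‖ * ‖T‖ := ContinuousLinearMap.opNorm_comp_le _ _
        _ ≤ ‖fs n‖ * 1 := by
            exact mul_le_mul_of_nonneg_left hT (norm_nonneg _)
        _ = ‖fs n‖ := mul_one _
    -- decompose
    have hdecomp : (g + (fs n).comp T) x =
        (g S + ((fs n).comp T) r) + (g r + ((fs n).comp T) S) := by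
      simp only [ContinuousLinearMap.add_apply, hr, map_sub]
      ring
    -- bound the principal part
    have hgS : |g S| ≤ (∑ k ∈ Finset.range N, |a k| ^ q) ^ (1 / q) * ‖S‖ := by
      rw [hS, gsum g (fun k => x k) (Finset.range N)]
      have h1 := holderF (Finset.range N) x
      have h2 : (∑ k ∈ Finset.range N, |x k| ^ pt) ^ (1 / pt) = ‖S‖ := by
        have h4 : ∑ k ∈ Finset.range N, |x k| ^ pt = ‖S‖ ^ pt := by
          rw [hS, lp.norm_sum_single hpt0 (fun k => x k) (Finset.range N)]
          exact Finset.sum_congr rfl fun k _ => by rw [Real.norm_eq_abs]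
        rw [h4, rpow_rpow_oneDiv (norm_nonneg _) hpt0.ne']
      rw [← h2]
      exact h1
    have hhr : |((fs n).comp T) r| ≤ ‖fs n‖ * ‖r‖ := by
      have := ((fs n).comp T).le_opNorm r
      rw [Real.norm_eq_abs] at this
      exact this.trans (mul_le_mul_of_nonneg_right hhcomp (norm_nonneg _))
    have hAle : (∑ k ∈ Finset.range N, |a k| ^ q) ≤ ‖f‖ ^ q :=
      (bddA (Finset.range N)).trans
        (Real.rpow_le_rpow (norm_nonneg _) hgf hq0.le)
    have hprin : |g S + ((fs n).comp T) r| ≤ w n * ‖x‖ := by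
      set A := (∑ k ∈ Finset.range N, |a k| ^ q) ^ (1 / q) with hA
      have hA0 : 0 ≤ A := Real.rpow_nonneg
        (Finset.sum_nonneg fun k _ => Real.rpow_nonneg (abs_nonneg _) _) _
      calc |g S + ((fs n).comp T) r| ≤ |g S| + |((fs n).comp T) r| := abs_add_le _ _
        _ ≤ A * ‖S‖ + ‖fs n‖ * ‖r‖ := add_le_add hgS hhr
        _ ≤ (A ^ q + ‖fs n‖ ^ q) ^ (1 / q) * (‖S‖ ^ pt + ‖r‖ ^ pt) ^ (1 / pt) :=
            holder_two hpq hA0 (norm_nonneg _) (norm_nonneg _) (norm_nonneg _)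
        _ = (A ^ q + ‖fs n‖ ^ q) ^ (1 / q) * ‖x‖ := by
            rw [hr, hS, hsplitnorm N x, rpow_rpow_oneDiv (norm_nonneg _) hpt0.ne']
        _ ≤ w n * ‖x‖ := by
            have hAq : A ^ q = ∑ k ∈ Finset.range N, |a k| ^ q :=
              rpow_oneDiv_rpow (Finset.sum_nonneg fun k _ =>
                Real.rpow_nonneg (abs_nonneg _) _) hq0.ne'
            have h5 : A ^ q + ‖fs n‖ ^ q ≤ ‖f‖ ^ q + ‖fs n‖ ^ q := by
              rw [hAq]; linarith
            have h6' : (A ^ q + ‖fs n‖ ^ q) ^ (1 / q) ≤ w n :=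
              Real.rpow_le_rpow (add_nonneg (Real.rpow_nonneg hA0 q)
                (Real.rpow_nonneg (norm_nonneg _) q)) h5 (one_div_nonneg.mpr hq0.le)
            exact mul_le_mul_of_nonneg_right h6' (norm_nonneg _)
    have hgr : |g r| ≤ ε * ‖x‖ := htail x
    have hhS : |((fs n).comp T) S| ≤ δ N n * ‖x‖ := hheadbound N n x
    calc ‖(g + (fs n).comp T) x‖ = |(g S + ((fs n).comp T) r) + (g r + ((fs n).comp T) S)| := by
          rw [Real.norm_eq_abs, hdecomp]
      _ ≤ |g S + ((fs n).comp T) r| + (|g r| + |((fs n).comp T) S|) :=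
          (abs_add_le _ _).trans (by gcongr; exact abs_add_le _ _)
      _ ≤ w n * ‖x‖ + (ε * ‖x‖ + δ N n * ‖x‖) := by
          exact add_le_add hprin (add_le_add hgr hhS)
      _ = (w n + (ε + δ N n)) * ‖x‖ := by ring
  -- limsup endgame
  have hcobdd_w : IsCoboundedUnder (· ≤ ·) atTop w :=
    isCoboundedUnder_le_of_le atTop (x := 0) hw0
  have hbdd_w : IsBoundedUnder (· ≤ ·) atTop w :=
    isBoundedUnder_of ⟨(‖f‖ ^ q + C ^ q) ^ (1 / q), hwW⟩
  by_contra hcon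
  push_neg at hcon
  set R := limsup (fun n => ((‖f + fs n‖ ^ q + ‖f - fs n‖ ^ q) / 2) ^ (1 / q)) atTop with hR
  set L := limsup (fun n => ‖g + (fs n).comp T‖) atTop with hL
  have hgap : 0 < (L - R) / 2 := by linarith
  set ε := (L - R) / 4 with hε
  have hε0 : 0 < ε := by rw [hε]; linarith
  obtain ⟨N, hN⟩ := tail ε hε0
  have hev : ∀ᶠ n in atTop, ‖g + (fs n).comp T‖ ≤ w n + 2 * ε := by
    filter_upwards [(hδtend N).eventually_lt_const hε0] with n hn
    have := key N ε hε0 hN n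
    linarith
  have hstep : L ≤ limsup (fun n => w n + 2 * ε) atTop := by
    rw [hL]
    exact limsup_le_limsup hev
      (isCoboundedUnder_le_of_le atTop (x := 0) fun n => norm_nonneg _)
      (isBoundedUnder_of ⟨(‖f‖ ^ q + C ^ q) ^ (1 / q) + 2 * ε,
        fun n => add_le_add_left (hwW n) _⟩)
  rw [limsup_add_const atTop w (2 * ε) hbdd_w hcobdd_w] at hstep
  have hfinal : limsup w atTop ≤ R := h6 f fs hfs
  rw [hε] at hstep
  linarith
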